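/- arXiv:1001.3286 — 2 statements merged into one kernel-verified Lean document; each statement's English description precedes it below -/
import Mathlib

section
/- Let K be a field, W a finite-dimensional K-linear subspace of K[[z_1,…,z_n]], and let F : ℤ → {K-subspaces of W} be a decreasing family (F_{η+1} ⊆ F_η for all η ∈ ℤ) with F_η = W for all sufficiently small η and F_η = {0} for all sufficiently large η. For each α in the finite set v(W∖{0}) := {v(f) : f ∈ W, f ≠ 0}, define G(α) := max{η ∈ ℤ : α = v(f) for some nonzero f ∈ F_η}. Then for every η ∈ ℤ one has dim_K F_η = card {α ∈ v(W∖{0}) : G(α) ≥ η}. -/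
/-- `α` is the lexicographic leading exponent (the lex-smallest multi-index with nonzero
coefficient) of the multivariate formal power series `f`. -/
def IsLexLeadExp {n : ℕ} {K : Type*} [CommRing K]
    (f : MvPowerSeries (Fin n) K) (α : Lex (Fin n →₀ ℕ)) : Prop :=
  IsLeast {β : Lex (Fin n →₀ ℕ) | MvPowerSeries.coeff (ofLex β) f ≠ 0} α

/-- The set `v(W∖{0})` of lexicographic leading exponents of nonzero elements of `W`. -/
def lexLeadExps {n : ℕ} {K : Type*} [CommRing K]
    (W : Submodule K (MvPowerSeries (Fin n) K)) : Set (Lex (Fin n →₀ ℕ)) :=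
  {α : Lex (Fin n →₀ ℕ) | ∃ f ∈ W, f ≠ 0 ∧ IsLexLeadExp f α}

/-- Every nonzero power series has a lexicographic leading exponent (lex on `ℕ^n` is a
well-order). -/
lemma exists_isLexLeadExp {n : ℕ} {K : Type*} [CommRing K]
    {f : MvPowerSeries (Fin n) K} (hf : f ≠ 0) : ∃ α, IsLexLeadExp f α := by
  have hne : {β : Lex (Fin n →₀ ℕ) | MvPowerSeries.coeff (ofLex β) f ≠ 0}.Nonempty := by
    rcases Set.eq_empty_or_nonempty
      {β : Lex (Fin n →₀ ℕ) | MvPowerSeries.coeff (ofLex β) f ≠ 0} with h | h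
    · exfalso
      apply hf
      ext d
      have := Set.eq_empty_iff_forall_notMem.1 h (toLex d)
      simpa using this
    · exact h
  obtain ⟨α, hα, hmin⟩ :=
    (IsWellFounded.wf (r := ((· < ·) : Lex (Fin n →₀ ℕ) → Lex (Fin n →₀ ℕ) → Prop))).has_min
      _ hne
  exact ⟨α, hα, fun β hβ => not_lt.1 fun h => hmin β hβ h⟩

lemma IsLexLeadExp.coeff_eq_zero {n : ℕ} {K : Type*} [CommRing K]
    {f : MvPowerSeries (Fin n) K} {α : Lex (Fin n →₀ ℕ)} (h : IsLexLeadExp f α)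
    {β : Lex (Fin n →₀ ℕ)} (hβ : β < α) : MvPowerSeries.coeff (ofLex β) f = 0 := by
  by_contra hc
  exact absurd (h.2 hc) (not_le.2 hβ)

/-- The dimension of a finite-dimensional space of power series equals the number of
leading exponents of its nonzero elements. -/
lemma finrank_eq_ncard_lexLeadExps {n : ℕ} {K : Type*} [Field K]
    (V : Submodule K (MvPowerSeries (Fin n) K)) [FiniteDimensional K V] :
    Module.finrank K V = (lexLeadExps V).ncard := by
  classical
  have hw : ∀ α : lexLeadExps V, ∃ f : V,
      (f : MvPowerSeries (Fin n) K) ≠ 0 ∧ IsLexLeadExp (f : MvPowerSeries (Fin n) K) ↑α := by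
    rintro ⟨α, f, hfV, hf0, hlead⟩
    exact ⟨⟨f, hfV⟩, hf0, hlead⟩
  choose w hw0 hwlead using hw
  -- linear independence of the witnesses
  have hli : LinearIndependent K w := by
    rw [linearIndependent_iff']
    intro s g hsum i hi
    by_contra hgi
    set t := s.filter (fun j => g j ≠ 0) with ht
    have htne : t.Nonempty := ⟨i, Finset.mem_filter.2 ⟨hi, hgi⟩⟩
    set α0 := t.min' htne with hα0
    have hα0t : α0 ∈ t := t.min'_mem htne
    have hα0s : α0 ∈ s := (Finset.mem_filter.1 hα0t).1
    have h1 : MvPowerSeries.coeff (ofLex ↑α0)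
        ((↑(∑ j ∈ s, g j • w j) : MvPowerSeries (Fin n) K)) = 0 := by
      rw [hsum]; simp
    rw [Submodule.coe_sum] at h1
    simp_rw [Submodule.coe_smul, map_sum, map_smul] at h1
    rw [Finset.sum_eq_single_of_mem α0 hα0s] at h1
    · have hc0 : MvPowerSeries.coeff (ofLex ↑α0) (↑(w α0) : MvPowerSeries (Fin n) K) ≠ 0 :=
        (hwlead α0).1
      have : g α0 = 0 := by
        rcases smul_eq_zero.1 h1 with h | h
        · exact h
        · exact absurd h hc0
      exact (Finset.mem_filter.1 hα0t).2 this
    · intro j hjs hjne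
      by_cases hgj : g j = 0
      · rw [hgj, zero_smul]
      · have hjt : j ∈ t := Finset.mem_filter.2 ⟨hjs, hgj⟩
        have hle : α0 ≤ j := t.min'_le j hjt
        have hlt : (↑α0 : Lex (Fin n →₀ ℕ)) < ↑j := by
          rcases lt_or_eq_of_le hle with h | h
          · exact Subtype.coe_lt_coe.2 h
          · exact absurd h (Ne.symm hjne)
        rw [(hwlead j).coeff_eq_zero hlt, smul_zero]
  have hfinset : (lexLeadExps V).Finite := by
    have : Finite (lexLeadExps V) := hli.finite
    exact Set.toFinite _
  -- the witnesses span
  have hsp : ⊤ ≤ Submodule.span K (Set.range w) := by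
    intro x _
    by_contra hx
    set S := Submodule.span K (Set.range w) with hS
    set A := {α : Lex (Fin n →₀ ℕ) | ∃ y : V, y ∉ S ∧
      IsLexLeadExp (y : MvPowerSeries (Fin n) K) α} with hA
    have hAsub : A ⊆ lexLeadExps V := by
      rintro α ⟨y, hyS, hylead⟩
      have hy0 : (y : MvPowerSeries (Fin n) K) ≠ 0 := by
        intro h0
        apply hyS
        have : y = 0 := Subtype.ext h0
        rw [this]; exact Submodule.zero_mem _
      exact ⟨↑y, y.2, hy0, hylead⟩
    have hAfin : A.Finite := hfinset.subset hAsub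
    have hAne : A.Nonempty := by
      have hx0 : (x : MvPowerSeries (Fin n) K) ≠ 0 := by
        intro h0
        apply hx
        have : x = 0 := Subtype.ext h0
        rw [this]; exact Submodule.zero_mem _
      obtain ⟨α, hα⟩ := exists_isLexLeadExp hx0
      exact ⟨α, x, hx, hα⟩
    obtain ⟨α, hαA, hαmax⟩ := Set.exists_max_image A id hAfin hAne
    obtain ⟨y, hyS, hylead⟩ := hαA
    set j : lexLeadExps V := ⟨α, hAsub ⟨y, hyS, hylead⟩⟩ with hj
    have hwj0 : MvPowerSeries.coeff (ofLex α) (↑(w j) : MvPowerSeries (Fin n) K) ≠ 0 :=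
      (hwlead j).1
    set c : K := MvPowerSeries.coeff (ofLex α) (y : MvPowerSeries (Fin n) K) /
      MvPowerSeries.coeff (ofLex α) (↑(w j) : MvPowerSeries (Fin n) K) with hc
    set z : V := y - c • w j with hz
    have hwjS : w j ∈ S := Submodule.subset_span ⟨j, rfl⟩
    have hzS : z ∉ S := by
      intro hzmem
      apply hyS
      have : y = z + c • w j := by rw [hz]; abel
      rw [this]
      exact Submodule.add_mem _ hzmem (Submodule.smul_mem _ _ hwjS)
    have hz0 : (z : MvPowerSeries (Fin n) K) ≠ 0 := by
      intro h0
      apply hzS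
      have : z = 0 := Subtype.ext h0
      rw [this]; exact Submodule.zero_mem _
    have hcoeffz : ∀ β : Lex (Fin n →₀ ℕ), β ≤ α →
        MvPowerSeries.coeff (ofLex β) (z : MvPowerSeries (Fin n) K) = 0 := by
      intro β hβ
      have hzc : (z : MvPowerSeries (Fin n) K) =
          (y : MvPowerSeries (Fin n) K) - c • (↑(w j) : MvPowerSeries (Fin n) K) := by
        rw [hz]; push_cast; ring
      rcases lt_or_eq_of_le hβ with hlt | heq
      · rw [hzc, map_sub, map_smul, hylead.coeff_eq_zero hlt,
          (hwlead j).coeff_eq_zero hlt, smul_zero, sub_zero]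
      · subst heq
        rw [hzc, map_sub, map_smul, smul_eq_mul, hc, div_mul_cancel₀ _ hwj0, sub_self]
    obtain ⟨γ, hγ⟩ := exists_isLexLeadExp hz0
    have hγA : γ ∈ A := ⟨z, hzS, hγ⟩
    have : γ ≤ α := hαmax γ hγA
    exact hγ.1 (hcoeffz γ this)
  let b := Module.Basis.mk hli hsp
  haveI := FiniteDimensional.fintypeBasisIndex b
  rw [Module.finrank_eq_card_basis b, ← Nat.card_eq_fintype_card, Nat.card_coe_set_eq]

/-- Let `K` be a field, `W` a finite-dimensional subspace of `K[[z_1,…,z_n]]`, and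
`F : ℤ → {subspaces of W}` a decreasing family with `F η = W` for `η ≪ 0` and `F η = 0`
for `η ≫ 0`. For `α ∈ v(W∖{0})` let `G α` be the largest `η` such that `α = v(f)` for some
nonzero `f ∈ F η`. Then for every `η ∈ ℤ`,
`dim_K (F η) = card {α ∈ v(W∖{0}) : G α ≥ η}`. -/
theorem finrank_filtration_eq_card_lexLeadExps (n : ℕ) (hn : 1 ≤ n) (K : Type*) [Field K]
    (W : Submodule K (MvPowerSeries (Fin n) K)) [FiniteDimensional K W]
    (F : ℤ → Submodule K (MvPowerSeries (Fin n) K))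
    (hFW : ∀ η : ℤ, F η ≤ W)
    (hFdec : ∀ η : ℤ, F (η + 1) ≤ F η)
    (hFleft : ∃ N : ℤ, ∀ η ≤ N, F η = W)
    (hFright : ∃ M : ℤ, ∀ η ≥ M, F η = ⊥)
    (G : Lex (Fin n →₀ ℕ) → ℤ)
    (hG : ∀ α ∈ lexLeadExps W,
      IsGreatest {η : ℤ | ∃ f ∈ F η, f ≠ 0 ∧ IsLexLeadExp f α} (G α)) :
    ∀ η : ℤ, Module.finrank K (F η) =
      Set.ncard {α ∈ lexLeadExps W | η ≤ G α} := by
  intro η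
  haveI : FiniteDimensional K (F η) := Submodule.finiteDimensional_of_le (hFW η)
  have hmono : ∀ a b : ℤ, a ≤ b → F b ≤ F a := by
    intro a b hab
    refine Int.le_induction (m := a) (motive := fun b _ => F b ≤ F a) le_rfl ?_ b hab
    intro m _ ih
    exact (hFdec m).trans ih
  have hset : {α ∈ lexLeadExps W | η ≤ G α} = lexLeadExps (F η) := by
    ext α
    constructor
    · rintro ⟨hαW, hηG⟩
      obtain ⟨f, hfF, hf0, hlead⟩ := (hG α hαW).1
      exact ⟨f, hmono η (G α) hηG hfF, hf0, hlead⟩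
    · rintro ⟨f, hfF, hf0, hlead⟩
      have hαW : α ∈ lexLeadExps W := ⟨f, hFW η hfF, hf0, hlead⟩
      exact ⟨hαW, (hG α hαW).2 ⟨f, hfF, hf0, hlead⟩⟩
  rw [hset]
  exact finrank_eq_ncard_lexLeadExps (F η)
end

section
/- Let K be an integral domain, and for each k ∈ ℕ let W_k be a K-submodule of K[[z_1,…,z_n]] with W_k · W_m ⊆ W_{k+m}. Suppose that for each k we are given a decreasing family F^{(k)} : ℤ → {K-submodules of W_k} (F^{(k)}_{η+1} ⊆ F^{(k)}_η), with F^{(k)}_η = W_k for all sufficiently small η and F^{(k)}_η = {0} for all sufficiently large η, which is multiplicative in the sense that F^{(k)}_η · F^{(m)}_{η'} ⊆ F^{(k+m)}_{η+η'} for all k, m ∈ ℕ and η, η' ∈ ℤ. Define G_k(α) := max{η ∈ ℤ : α = v(f) for some nonzero f ∈ F^{(k)}_η} for α ∈ v(W_k∖{0}). Then for all k, m ∈ ℕ and all nonzero f ∈ W_k, g ∈ W_m, one has G_{k+m}(v(f) + v(g)) ≥ G_k(v(f)) + G_m(v(g)). -/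
/-- Over a domain, the lex leading exponent of a product is the sum of the leading
exponents, and the product is nonzero. -/
lemma isLexLeadExp_mul {n : ℕ} {K : Type*} [CommRing K] [IsDomain K]
    {f g : MvPowerSeries (Fin n) K} {α β : Lex (Fin n →₀ ℕ)}
    (hf : IsLexLeadExp f α) (hg : IsLexLeadExp g β) :
    f * g ≠ 0 ∧ IsLexLeadExp (f * g) (α + β) := by
  have key : MvPowerSeries.coeff (ofLex (α + β)) (f * g)
      = MvPowerSeries.coeff (ofLex α) f * MvPowerSeries.coeff (ofLex β) g := by
    rw [MvPowerSeries.coeff_mul]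
    apply Finset.sum_eq_single_of_mem (ofLex α, ofLex β)
    · rw [Finset.HasAntidiagonal.mem_antidiagonal]; rfl
    · rintro ⟨p, q⟩ hmem hne
      rw [Finset.HasAntidiagonal.mem_antidiagonal] at hmem
      by_contra h
      have hp : MvPowerSeries.coeff p f ≠ 0 := fun h0 => h (by simp [h0])
      have hq : MvPowerSeries.coeff q g ≠ 0 := fun h0 => h (by simp [h0])
      have h1 : α ≤ toLex p := hf.2 hp
      have h2 : β ≤ toLex q := hg.2 hq
      have hsum : toLex p + toLex q = α + β := congrArg toLex hmem
      have hpe : toLex p = α := by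
        rcases h1.lt_or_eq with h1' | h1'
        · exact absurd hsum (ne_of_gt (add_lt_add_of_lt_of_le h1' h2))
        · exact h1'.symm
      have hqe : toLex q = β := by
        rw [hpe] at hsum
        exact add_left_cancel hsum
      exact hne (by rw [← hpe, ← hqe]; rfl)
  have hne : MvPowerSeries.coeff (ofLex (α + β)) (f * g) ≠ 0 := by
    rw [key]; exact mul_ne_zero hf.1 hg.1
  refine ⟨fun h0 => hne (by simp [h0]), hne, ?_⟩
  intro γ hγ
  rw [Set.mem_setOf_eq, MvPowerSeries.coeff_mul] at hγ
  obtain ⟨⟨p, q⟩, hmem, hpq⟩ := Finset.exists_ne_zero_of_sum_ne_zero hγ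
  rw [Finset.HasAntidiagonal.mem_antidiagonal] at hmem
  have hp : MvPowerSeries.coeff p f ≠ 0 := fun h0 => hpq (by simp [h0])
  have hq : MvPowerSeries.coeff q g ≠ 0 := fun h0 => hpq (by simp [h0])
  calc α + β ≤ toLex p + toLex q := add_le_add (hf.2 hp) (hg.2 hq)
    _ = γ := congrArg toLex hmem

/-- Let `K` be an integral domain, `W k` submodules of `K[[z_1,…,z_n]]` with
`W k · W m ⊆ W (k+m)`, and for each `k` a decreasing, left- and right-bounded family
`F k : ℤ → {submodules of W k}` which is multiplicative:
`F k η · F m η' ⊆ F (k+m) (η+η')`. With `G k α` the largest `η` such that `α = v(f)` for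
some nonzero `f ∈ F k η`, one has for all nonzero `f ∈ W k`, `g ∈ W m` the
superadditivity `G (k+m) (v(f)+v(g)) ≥ G k (v(f)) + G m (v(g))`. -/
theorem concave_transform_superadditive (n : ℕ) (hn : 1 ≤ n) (K : Type*)
    [CommRing K] [IsDomain K]
    (W : ℕ → Submodule K (MvPowerSeries (Fin n) K))
    (hW : ∀ k m : ℕ, ∀ f ∈ W k, ∀ g ∈ W m, f * g ∈ W (k + m))
    (F : ℕ → ℤ → Submodule K (MvPowerSeries (Fin n) K))
    (hFW : ∀ k : ℕ, ∀ η : ℤ, F k η ≤ W k)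
    (hFdec : ∀ k : ℕ, ∀ η : ℤ, F k (η + 1) ≤ F k η)
    (hFleft : ∀ k : ℕ, ∃ N : ℤ, ∀ η ≤ N, F k η = W k)
    (hFright : ∀ k : ℕ, ∃ M : ℤ, ∀ η ≥ M, F k η = ⊥)
    (hFmul : ∀ k m : ℕ, ∀ η η' : ℤ, ∀ f ∈ F k η, ∀ g ∈ F m η',
      f * g ∈ F (k + m) (η + η'))
    (G : ℕ → Lex (Fin n →₀ ℕ) → ℤ)
    (hG : ∀ k : ℕ, ∀ α ∈ lexLeadExps (W k),
      IsGreatest {η : ℤ | ∃ f ∈ F k η, f ≠ 0 ∧ IsLexLeadExp f α} (G k α)) :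
    ∀ k m : ℕ, ∀ f ∈ W k, f ≠ 0 → ∀ g ∈ W m, g ≠ 0 →
      ∀ vf vg : Lex (Fin n →₀ ℕ), IsLexLeadExp f vf → IsLexLeadExp g vg →
        G k vf + G m vg ≤ G (k + m) (toLex (ofLex vf + ofLex vg)) := by
  intro k m f hfW hfne g hgW hgne vf vg hvf hvg
  obtain ⟨f', hf'F, hf'ne, hf'lead⟩ := (hG k vf ⟨f, hfW, hfne, hvf⟩).1
  obtain ⟨g', hg'F, hg'ne, hg'lead⟩ := (hG m vg ⟨g, hgW, hgne, hvg⟩).1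
  obtain ⟨hfgne, hfglead⟩ := isLexLeadExp_mul hf'lead hg'lead
  have hmem : f' * g' ∈ F (k + m) (G k vf + G m vg) :=
    hFmul k m (G k vf) (G m vg) f' hf'F g' hg'F
  have hsum : vf + vg = toLex (ofLex vf + ofLex vg) := rfl
  have hin : toLex (ofLex vf + ofLex vg) ∈ lexLeadExps (W (k + m)) :=
    ⟨f' * g', hFW (k + m) _ hmem, hfgne, hsum ▸ hfglead⟩
  exact (hG (k + m) _ hin).2 ⟨f' * g', hmem, hfgne, hsum ▸ hfglead⟩
end
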